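/- Let $p: W \to U$ be a surjective linear map with kernel $V$, and let $\pi_W, \pi_U$ be bivectors with $(\wedge^2 p)(\pi_W) = \pi_U$. Then $\mathrm{Gr}(\pi_W) \cap (V \oplus V^{\circ}) = \{\pi_W^{\sharp}(p^*\eta) + p^*\eta : \eta \in U^*, \pi_U^{\sharp}(\eta) = 0\}$. -/

import Mathlib

/-- For a surjective Poisson linear map `p : (W,π_W) → (U,π_U)` with kernel
`V`, the intersection `Gr(π_W) ∩ (V ⊕ V°)` equals
`{π_W^♯(p^*η) + p^*η : η ∈ U*, π_U^♯(η) = 0}`. -/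
theorem stmt6 (W U : Type*) [AddCommGroup W] [Module ℝ W] [FiniteDimensional ℝ W]
    [AddCommGroup U] [Module ℝ U] [FiniteDimensional ℝ U]
    (p : W →ₗ[ℝ] U) (hp : Function.Surjective p)
    (πW : Module.Dual ℝ W →ₗ[ℝ] W)
    (hWskew : ∀ ξ η : Module.Dual ℝ W, ξ (πW η) = - η (πW ξ))
    (πU : Module.Dual ℝ U →ₗ[ℝ] U)
    (hUskew : ∀ ξ η : Module.Dual ℝ U, ξ (πU η) = - η (πU ξ))
    (hPoisson : ∀ η : Module.Dual ℝ U, p (πW (η.comp p)) = πU η) :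
    {q : W × Module.Dual ℝ W |
        (∃ ξ : Module.Dual ℝ W, q = (πW ξ, ξ)) ∧
        q.1 ∈ LinearMap.ker p ∧ q.2 ∈ (LinearMap.ker p).dualAnnihilator}
    = {q : W × Module.Dual ℝ W |
        ∃ η : Module.Dual ℝ U, πU η = 0 ∧ q = (πW (η.comp p), η.comp p)} := by
  ext q
  simp only [Set.mem_setOf_eq]
  constructor
  · rintro ⟨⟨ξ, rfl⟩, h1, h2⟩
    simp only [LinearMap.mem_ker] at h1
    rw [Submodule.mem_dualAnnihilator] at h2
    set e := p.quotKerEquivOfSurjective hp with he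
    have hker : ∀ w ∈ LinearMap.ker p, ξ w = 0 := h2
    set η := ((LinearMap.ker p).liftQ ξ hker).comp e.symm.toLinearMap with hηdef
    have hcomp : η.comp p = ξ := by
      ext w
      have : e.symm (p w) = Submodule.Quotient.mk w := by
        apply e.injective
        simp [he, LinearMap.quotKerEquivOfSurjective]
      simp [hηdef, LinearMap.comp_apply, this]
      exact Submodule.liftQ_apply _ _ _
    refine ⟨η, ?_, ?_⟩
    · rw [← hPoisson, hcomp, h1]
    · rw [hcomp]
  · rintro ⟨η, hη, rfl⟩
    refine ⟨⟨η.comp p, rfl⟩, ?_, ?_⟩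
    · simp only [LinearMap.mem_ker]
      rw [hPoisson, hη]
    · rw [Submodule.mem_dualAnnihilator]
      intro w hw
      simp only [LinearMap.mem_ker] at hw
      simp [LinearMap.comp_apply, hw]
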